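/- Let (x̄,λ̄) be a KKT point of the unperturbed problem (a,b)=(0,0). Then the multiplier set map M(x,a,b) is calm at (x̄,0,0) for λ̄ if and only if the map G_x̄(η,y) = {λ ∈ Y : η + ∇g(x̄)*λ = 0 and y = Π_K(y + λ)} is calm at (∇f(x̄), g(x̄)) for λ̄. -/
import Mathlib


open Set Filter Topology Metric Pointwise
open scoped RealInnerProductSpace Classical

noncomputable section

/-- The normal cone of convex analysis: `N_K(z) = {l | ⟪l, y - z⟫ ≤ 0 ∀ y ∈ K}`,
empty when `z ∉ K`. -/
def nCone {E : Type*} [NormedAddCommGroup E] [InnerProductSpace ℝ E]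
    (K : Set E) (z : E) : Set E :=
  {l | z ∈ K ∧ ∀ y ∈ K, ⟪l, y - z⟫ ≤ 0}

/-- The metric projection onto `K`: under the standing assumptions (`K` nonempty,
closed and convex in a finite-dimensional space) the distance minimizer exists and
is unique, so this choice-based definition is exactly the metric projection `Π_K`. -/

def projK {E : Type*} [NormedAddCommGroup E] [InnerProductSpace ℝ E]
    (K : Set E) (z : E) : E :=
  if h : ∃ p, p ∈ K ∧ ∀ y ∈ K, ‖z - p‖ ≤ ‖z - y‖ then h.choose else 0

/-- A set `D` is a pointed closed convex cone. -/
def PointedClosedConvexCone {E : Type*} [NormedAddCommGroup E] [NormedSpace ℝ E]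
    (D : Set E) : Prop :=
  IsClosed D ∧ Convex ℝ D ∧ (∀ t : ℝ, 0 ≤ t → ∀ z ∈ D, t • z ∈ D) ∧ D ∩ (-D) ⊆ {0}

/-- `K` is `C²`-cone reducible at `y`: near `y`, `K` is the inverse image of a pointed
closed convex cone `D` under a twice continuously differentiable map `Ξ` with `Ξ y = 0`
and `Ξ'(y)` surjective.  (Since the target of the reduction is a finite-dimensional
space of dimension at most `dim Y`, it can be taken to be a Euclidean space.) -/
def C2ConeReducibleAt {Y : Type*} [NormedAddCommGroup Y] [InnerProductSpace ℝ Y]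
    (K : Set Y) (y : Y) : Prop :=
  ∃ (m : ℕ) (U : Set Y) (D : Set (EuclideanSpace ℝ (Fin m)))
    (Ξ : Y → EuclideanSpace ℝ (Fin m)),
      IsOpen U ∧ y ∈ U ∧ PointedClosedConvexCone D ∧ ContDiffOn ℝ 2 Ξ U ∧
      Ξ y = 0 ∧ Function.Surjective (fderiv ℝ Ξ y) ∧ K ∩ U = {y' ∈ U | Ξ y' ∈ D}

/-- `K` is `C²`-cone reducible (at every point of `K`). -/
def C2ConeReducible {Y : Type*} [NormedAddCommGroup Y] [InnerProductSpace ℝ Y]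
    (K : Set Y) : Prop :=
  ∀ y ∈ K, C2ConeReducibleAt K y

/-- Calmness of a set-valued map `F` at `z0` for `w0 ∈ F z0`. -/
def Calm {Z W : Type*} [NormedAddCommGroup Z] [NormedAddCommGroup W]
    (F : Z → Set W) (z0 : Z) (w0 : W) : Prop :=
  ∃ κ ε δ : ℝ, 0 < κ ∧ 0 < ε ∧ 0 < δ ∧
    ∀ z : Z, ‖z - z0‖ ≤ ε → ∀ w ∈ F z, ‖w - w0‖ ≤ δ →
      ∃ w' ∈ F z0, ‖w - w'‖ ≤ κ * ‖z - z0‖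

/-- Isolated calmness of a set-valued map `F` at `z0` for `w0 ∈ F z0`. -/
def IsolatedCalm {Z W : Type*} [NormedAddCommGroup Z] [NormedAddCommGroup W]
    (F : Z → Set W) (z0 : Z) (w0 : W) : Prop :=
  ∃ κ ε δ : ℝ, 0 < κ ∧ 0 < ε ∧ 0 < δ ∧
    ∀ z : Z, ‖z - z0‖ ≤ ε → ∀ w ∈ F z, ‖w - w0‖ ≤ δ →
      ‖w - w0‖ ≤ κ * ‖z - z0‖

/-- Metric subregularity of `F` at `z0` for `w0 ∈ F z0`:
`dist(z, F⁻¹(w0)) ≤ κ · dist(w0, F z ∩ B_δ(w0))` for `z` near `z0`; since the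
right-hand side is an infimum over `F z ∩ B_δ(w0)` (`= +∞` when empty), this is
equivalently stated pointwise. -/
def MetricallySubregular {Z W : Type*} [NormedAddCommGroup Z] [NormedAddCommGroup W]
    (F : Z → Set W) (z0 : Z) (w0 : W) : Prop :=
  ∃ κ ε δ : ℝ, 0 < κ ∧ 0 < ε ∧ 0 < δ ∧
    ∀ z : Z, ‖z - z0‖ ≤ ε → ∀ w ∈ F z, ‖w - w0‖ ≤ δ →
      infDist z {z' : Z | w0 ∈ F z'} ≤ κ * ‖w0 - w‖

/-- `φ` has directional derivative `w` at `z` in direction `h`. -/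
def HasDirDeriv {E : Type*} [NormedAddCommGroup E] [NormedSpace ℝ E]
    (φ : E → E) (z h w : E) : Prop :=
  Tendsto (fun t : ℝ => t⁻¹ • (φ (z + t • h) - φ z)) (𝓝[>] (0 : ℝ)) (𝓝 w)

/-- The contingent (Bouligand) tangent cone to `s` at `z`. -/
def contCone {E : Type*} [NormedAddCommGroup E] [NormedSpace ℝ E]
    (s : Set E) (z : E) : Set E :=
  {w | ∃ (t : ℕ → ℝ) (v : ℕ → E), (∀ n, 0 < t n) ∧ Tendsto t atTop (𝓝 0) ∧
        Tendsto v atTop (𝓝 w) ∧ ∀ n, z + t n • v n ∈ s}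

/-- The negative polar cone of a set. -/
def negPolar {E : Type*} [NormedAddCommGroup E] [InnerProductSpace ℝ E]
    (C : Set E) : Set E :=
  {z | ∀ d ∈ C, ⟪z, d⟫ ≤ 0}

/-- The critical cone `C_K(y,u) = T_K(y) ∩ u^⊥`. -/
def criticalCone {E : Type*} [NormedAddCommGroup E] [InnerProductSpace ℝ E]
    (K : Set E) (y u : E) : Set E :=
  contCone K y ∩ {d | ⟪u, d⟫ = 0}

/-- The (outer) second-order tangent set `T²_K(y,h)`. -/
def secondOrderTangent {E : Type*} [NormedAddCommGroup E] [NormedSpace ℝ E]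
    (K : Set E) (y h : E) : Set E :=
  {w | ∃ (t : ℕ → ℝ) (v : ℕ → E), (∀ n, 0 < t n) ∧ Tendsto t atTop (𝓝 0) ∧
        Tendsto v atTop (𝓝 w) ∧ ∀ n, y + t n • h + ((t n) ^ 2 / 2) • v n ∈ K}

variable {X Y : Type*} [NormedAddCommGroup X] [InnerProductSpace ℝ X]
  [FiniteDimensional ℝ X] [NormedAddCommGroup Y] [InnerProductSpace ℝ Y]
  [FiniteDimensional ℝ Y]

/-- The KKT solution map of the canonically perturbed problem:
`∇f(x) + ∇g(x)*λ = a` and `λ ∈ N_K(g(x) − b)`. -/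
def sKKT (f : X → ℝ) (g : X → Y) (K : Set Y) (a : X) (b : Y) : Set (X × Y) :=
  {p | gradient f p.1 + ContinuousLinearMap.adjoint (fderiv ℝ g p.1) p.2 = a ∧
       p.2 ∈ nCone K (g p.1 - b)}

/-- The multiplier set map `M(x,a,b)`. -/
def mSet (f : X → ℝ) (g : X → Y) (K : Set Y) (x : X) (a : X) (b : Y) : Set Y :=
  {l | (x, l) ∈ sKKT f g K a b}

/-- The stationary point map `X_KKT(a,b)`. -/
def xKKT (f : X → ℝ) (g : X → Y) (K : Set Y) (a : X) (b : Y) : Set X :=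
  {x | ∃ l, (x, l) ∈ sKKT f g K a b}

/-- The Hessian `∇²ₓₓL(x,λ)` of the Lagrangian `L(·,λ)` at `x`. -/
def hessLxx (f : X → ℝ) (g : X → Y) (x : X) (l : Y) : X →L[ℝ] X :=
  fderiv ℝ (fun u => gradient (fun v => f v + ⟪l, g v⟫) u) x

/-- The multiplier `l0` is noncritical: the only solutions `(ξ,v)` of
`∇²ₓₓL(x̄,λ̄)ξ + ∇g(x̄)*v = 0`, `g'(x̄)ξ − Π_K'(g(x̄)+λ̄; g'(x̄)ξ+v) = 0` have `ξ = 0`. -/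
def Noncritical (f : X → ℝ) (g : X → Y) (K : Set Y) (x0 : X) (l0 : Y) : Prop :=
  ∀ (ξ : X) (v : Y),
    hessLxx f g x0 l0 ξ + ContinuousLinearMap.adjoint (fderiv ℝ g x0) v = 0 →
    HasDirDeriv (projK K) (g x0 + l0) (fderiv ℝ g x0 ξ + v) (fderiv ℝ g x0 ξ) →
    ξ = 0

/-- Strong calmness of `S_KKT` at the origin for `(x̄,λ̄)`. -/
def StrongCalm (f : X → ℝ) (g : X → Y) (K : Set Y) (x0 : X) (l0 : Y) : Prop :=
  ∃ δ ε κ : ℝ, 0 < δ ∧ 0 < ε ∧ 0 < κ ∧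
    ∀ (a : X) (b : Y), ‖(a, b)‖ ≤ δ →
      ∀ (x : X) (l : Y), (x, l) ∈ sKKT f g K a b → ‖(x, l) - (x0, l0)‖ ≤ ε →
        ‖x - x0‖ + infDist l (mSet f g K x0 0 0) ≤ κ * ‖(a, b)‖

/-- Pseudo-isolated calmness of `X_KKT` at the origin for `x̄` (relative to `λ̄`). -/
def PseudoIsolatedCalm (f : X → ℝ) (g : X → Y) (K : Set Y) (x0 : X) (l0 : Y) : Prop :=
  ∃ ε δ κ : ℝ, 0 < ε ∧ 0 < δ ∧ 0 < κ ∧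
    ∀ (a : X) (b : Y), ‖(a, b)‖ ≤ δ →
      ∀ (x : X) (l : Y), (x, l) ∈ sKKT f g K a b → ‖(x, l) - (x0, l0)‖ ≤ ε →
        ‖x - x0‖ ≤ κ * ‖(a, b)‖

section Helpers

variable {E : Type*} [NormedAddCommGroup E] [InnerProductSpace ℝ E]

lemma projK_spec {K : Set E} (hcv : Convex ℝ K)
    (h : ∃ p, p ∈ K ∧ ∀ y ∈ K, ‖z - p‖ ≤ ‖z - y‖) :
    projK K z ∈ K ∧ ∀ w ∈ K, ⟪z - projK K z, w - projK K z⟫ ≤ 0 := by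
  have hpk : projK K z = h.choose := by rw [projK, dif_pos h]
  obtain ⟨hmem, hmin⟩ := h.choose_spec
  rw [hpk]
  refine ⟨hmem, ?_⟩
  have hinf : ‖z - h.choose‖ = ⨅ w : K, ‖z - w‖ := by
    haveI : Nonempty K := ⟨⟨h.choose, hmem⟩⟩
    have hbd : BddBelow (Set.range fun w : K => ‖z - (w : E)‖) := by
      refine ⟨0, ?_⟩
      rintro x ⟨w, rfl⟩
      exact norm_nonneg _
    exact le_antisymm (le_ciInf fun w => hmin w w.2) (ciInf_le hbd ⟨h.choose, hmem⟩)
  exact (norm_eq_iInf_iff_real_inner_le_zero hcv hmem).1 hinf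

lemma min_of_var {K : Set E} {z p : E} (hvar : ∀ w ∈ K, ⟪z - p, w - p⟫ ≤ 0) :
    ∀ y ∈ K, ‖z - p‖ ≤ ‖z - y‖ := by
  intro y hy
  have h1 : ‖z - y‖ ^ 2 = ‖z - p‖ ^ 2 - 2 * ⟪z - p, y - p⟫ + ‖y - p‖ ^ 2 := by
    have := @norm_sub_sq_real E _ _ (z - p) (y - p)
    rw [show z - p - (y - p) = z - y by abel] at this
    rw [this]
  have h2 := hvar y hy
  nlinarith [norm_nonneg (z - y), norm_nonneg (z - p), sq_nonneg (‖y - p‖)]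

lemma projK_eq {K : Set E} (hcv : Convex ℝ K) {z p : E} (hp : p ∈ K)
    (hvar : ∀ w ∈ K, ⟪z - p, w - p⟫ ≤ 0) : projK K z = p := by
  have hex : ∃ q, q ∈ K ∧ ∀ y ∈ K, ‖z - q‖ ≤ ‖z - y‖ := ⟨p, hp, min_of_var hvar⟩
  obtain ⟨hmem, hvarq⟩ := projK_spec hcv hex
  set q := projK K z
  have h1 := hvarq p hp
  have h2 := hvar q hmem
  have a1 : ⟪p - q, p - q⟫ = ⟪z - q, p - q⟫ - ⟪z - p, p - q⟫ := by
    rw [← inner_sub_left]; congr 1; abel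
  have a2 : ⟪z - p, q - p⟫ = -⟪z - p, p - q⟫ := by
    rw [← inner_neg_right]; congr 1; abel
  have : ⟪p - q, p - q⟫ ≤ 0 := by
    rw [a1]; rw [a2] at h2; linarith
  have := real_inner_self_nonpos.1 this
  have : p = q := by rwa [sub_eq_zero] at this
  exact this.symm

lemma mem_nCone_iff_proj {K : Set E} (hne : K.Nonempty) (hcl : IsClosed K)
    (hcv : Convex ℝ K) [CompleteSpace E] (y l : E) :
    l ∈ nCone K y ↔ y = projK K (y + l) := by
  constructor
  · rintro ⟨hyK, hvar⟩
    refine (projK_eq hcv hyK fun w hw => ?_).symm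
    have := hvar w hw
    rwa [add_sub_cancel_left]
  · intro h
    have hex : ∃ q, q ∈ K ∧ ∀ v ∈ K, ‖y + l - q‖ ≤ ‖y + l - v‖ := by
      obtain ⟨v, hv, hmin⟩ := exists_norm_eq_iInf_of_complete_convex hne hcl.isComplete hcv (y + l)
      refine ⟨v, hv, fun w hw => ?_⟩
      rw [hmin]
      have hbd : BddBelow (Set.range fun w : K => ‖y + l - (w : E)‖) := by
        refine ⟨0, ?_⟩
        rintro x ⟨w, rfl⟩
        exact norm_nonneg _
      exact ciInf_le hbd ⟨w, hw⟩
    obtain ⟨hmem, hvar⟩ := projK_spec hcv hex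
    rw [← h] at hmem hvar
    refine ⟨hmem, fun w hw => ?_⟩
    have := hvar w hw
    rwa [add_sub_cancel_left] at this

end Helpers

set_option maxHeartbeats 2000000 in
/-- Lemma 3.1: the multiplier set map `M(x,a,b)` is calm at
`(x̄,0,0)` for `λ̄` iff `G_x̄(η,y) = {λ | η + ∇g(x̄)*λ = 0, y = Π_K(y + λ)}` is calm at
`(∇f(x̄), g(x̄))` for `λ̄`. -/
theorem stmt_8 (f : X → ℝ) (g : X → Y) (K : Set Y)
    (hf : ContDiff ℝ 2 f) (hg : ContDiff ℝ 2 g)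
    (hKne : K.Nonempty) (hKcl : IsClosed K) (hKcv : Convex ℝ K)
    (hKred : C2ConeReducible K)
    (x0 : X) (l0 : Y) (hKKT : (x0, l0) ∈ sKKT f g K 0 0) :
    Calm (fun q : X × X × Y => mSet f g K q.1 q.2.1 q.2.2) (x0, 0, 0) l0
    ↔ Calm (fun p : X × Y =>
        {l : Y | p.1 + ContinuousLinearMap.adjoint (fderiv ℝ g x0) l = 0 ∧
                 p.2 = projK K (p.2 + l)})
        (gradient f x0, g x0) l0 := by
  classical
  haveI : CompleteSpace Y := FiniteDimensional.complete ℝ Y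
  set A0 := fderiv ℝ g x0 with hA0
  set adj := (ContinuousLinearMap.adjoint : (X →L[ℝ] Y) ≃ₗᵢ⋆[ℝ] (Y →L[ℝ] X)) with hadj
  -- the two target sets agree
  have hset : {l : Y | gradient f x0 + ContinuousLinearMap.adjoint (fderiv ℝ g x0) l = 0 ∧
      g x0 = projK K (g x0 + l)} = mSet f g K x0 0 0 := by
    ext l
    simp only [mSet, sKKT, Set.mem_setOf_eq, sub_zero]
    exact and_congr Iff.rfl (mem_nCone_iff_proj hKne hKcl hKcv (g x0) l).symm
  constructor
  · -- M calm → G calm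
    rintro ⟨κ, ε, δ, hκ, hε, hδ, H⟩
    refine ⟨κ, ε, δ, hκ, hε, hδ, ?_⟩
    rintro p hp l ⟨h1, h2⟩ hld
    set z : X × X × Y := (x0, gradient f x0 - p.1, g x0 - p.2) with hzdef
    have hmemM : l ∈ mSet f g K x0 (gradient f x0 - p.1) (g x0 - p.2) := by
      refine ⟨?_, ?_⟩
      · have : ContinuousLinearMap.adjoint (fderiv ℝ g x0) l = -p.1 :=
          eq_neg_of_add_eq_zero_right h1
        rw [this]; abel
      · rw [sub_sub_cancel]
        exact (mem_nCone_iff_proj hKne hKcl hKcv p.2 l).mpr h2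
    have hnorm : ‖z - ((x0 : X), ((0 : X), (0 : Y)))‖ = ‖p - (gradient f x0, g x0)‖ := by
      have hz : z - ((x0 : X), ((0 : X), (0 : Y)))
          = ((0 : X), (gradient f x0 - p.1, g x0 - p.2)) := by
        simp [hzdef, Prod.ext_iff]
      simp only [hz, Prod.norm_def, Prod.fst_sub, Prod.snd_sub, norm_zero]
      rw [norm_sub_rev (gradient f x0) p.1, norm_sub_rev (g x0) p.2]
      exact max_eq_right (le_max_of_le_left (norm_nonneg _))
    obtain ⟨l', hl', hle⟩ := H z (by rw [hnorm]; exact hp) l hmemM hld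
    refine ⟨l', hset.symm.subset hl', ?_⟩
    rwa [hnorm] at hle
  · -- G calm → M calm
    rintro ⟨κ, ε, δ, hκ, hε, hδ, H⟩
    -- Lipschitz constants
    obtain ⟨Kf, tf, htf, hLf⟩ :=
      ((hf.fderiv_right (m := 1) (by norm_num)).contDiffAt (x := x0)).exists_lipschitzOnWith
    obtain ⟨Kg', tg', htg', hLg'⟩ :=
      ((hg.fderiv_right (m := 1) (by norm_num)).contDiffAt (x := x0)).exists_lipschitzOnWith
    obtain ⟨Kg, tg, htg, hLg⟩ :=
      ((hg.of_le one_le_two).contDiffAt (x := x0)).exists_lipschitzOnWith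
    obtain ⟨rf, hrf, hrfs⟩ := Metric.mem_nhds_iff.1 htf
    obtain ⟨rg', hrg', hrg's⟩ := Metric.mem_nhds_iff.1 htg'
    obtain ⟨rg, hrg, hrgs⟩ := Metric.mem_nhds_iff.1 htg
    set r : ℝ := min rf (min rg rg') with hrdef
    have hr : 0 < r := lt_min hrf (lt_min hrg hrg')
    set B : ℝ := ‖l0‖ + δ with hBdef
    have hB : 0 < B := by positivity
    set C : ℝ := (Kf : ℝ) + (Kg' : ℝ) * B + (Kg : ℝ) + 2 with hCdef
    have hC : 0 < C := by positivity
    refine ⟨κ * C, min (r / 2) (ε / C), δ, by positivity, by positivity, hδ, ?_⟩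
    intro z hz l hl hld
    obtain ⟨h1, h2⟩ := hl
    set x := z.1 with hxdef
    set a := z.2.1 with hadef
    set b := z.2.2 with hbdef
    set N : ℝ := ‖z - ((x0 : X), ((0 : X), (0 : Y)))‖ with hNdef
    have hN0 : 0 ≤ N := norm_nonneg _
    have hx : ‖x - x0‖ ≤ N := by
      have := norm_fst_le (z - ((x0 : X), ((0 : X), (0 : Y))))
      simpa using this
    have hsnd : ‖z.2 - ((0 : X), (0 : Y))‖ ≤ N := by
      have := norm_snd_le (z - ((x0 : X), ((0 : X), (0 : Y))))
      simpa using this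
    have ha : ‖a‖ ≤ N := by
      have h' := norm_fst_le (z.2 - ((0 : X), (0 : Y)))
      simp only [Prod.fst_sub, sub_zero] at h'
      exact h'.trans hsnd
    have hb : ‖b‖ ≤ N := by
      have h' := norm_snd_le (z.2 - ((0 : X), (0 : Y)))
      simp only [Prod.snd_sub, sub_zero] at h'
      exact h'.trans hsnd
    have hNr : N ≤ r / 2 := le_trans hz (min_le_left _ _)
    have hNε : N ≤ ε / C := le_trans hz (min_le_right _ _)
    have hxr : ‖x - x0‖ < r := lt_of_le_of_lt (hx.trans hNr) (by linarith)
    have hxin : ∀ s : ℝ, r ≤ s → x ∈ Metric.ball x0 s := by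
      intro s hs
      rw [Metric.mem_ball, dist_eq_norm]
      exact lt_of_lt_of_le hxr hs
    have hx0in : ∀ s : ℝ, 0 < s → x0 ∈ Metric.ball x0 s := fun s hs =>
      Metric.mem_ball_self hs
    have hxtf : x ∈ tf := hrfs (hxin rf (min_le_left _ _))
    have hxtg' : x ∈ tg' := hrg's (hxin rg' ((min_le_right _ _).trans (min_le_right _ _)))
    have hxtg : x ∈ tg := hrgs (hxin rg ((min_le_right _ _).trans (min_le_left _ _)))
    have hx0tf : x0 ∈ tf := hrfs (hx0in rf hrf)
    have hx0tg' : x0 ∈ tg' := hrg's (hx0in rg' hrg')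
    have hx0tg : x0 ∈ tg := hrgs (hx0in rg hrg)
    -- the point of G
    set η : X := -(ContinuousLinearMap.adjoint (fderiv ℝ g x0) l) with hηdef
    set y : Y := g x - b with hydef
    have hmemG : η + ContinuousLinearMap.adjoint (fderiv ℝ g x0) l = 0 ∧
        y = projK K (y + l) := by
      refine ⟨by rw [hηdef]; abel, ?_⟩
      exact (mem_nCone_iff_proj hKne hKcl hKcv (g x - b) l).mp h2
    -- estimates
    have hlb : ‖l‖ ≤ B := by
      calc ‖l‖ = ‖l - l0 + l0‖ := by rw [sub_add_cancel]
        _ ≤ ‖l - l0‖ + ‖l0‖ := norm_add_le _ _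
        _ ≤ B := by rw [hBdef]; linarith
    have hfd : ‖fderiv ℝ g x - fderiv ℝ g x0‖ ≤ (Kg' : ℝ) * ‖x - x0‖ := by
      have := hLg'.dist_le_mul x hxtg' x0 hx0tg'
      rwa [dist_eq_norm, dist_eq_norm] at this
    have hadjd : ‖ContinuousLinearMap.adjoint (fderiv ℝ g x) l
        - ContinuousLinearMap.adjoint (fderiv ℝ g x0) l‖ ≤ (Kg' : ℝ) * ‖x - x0‖ * ‖l‖ := by
      have e1 : ContinuousLinearMap.adjoint (fderiv ℝ g x) l
          - ContinuousLinearMap.adjoint (fderiv ℝ g x0) l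
          = (ContinuousLinearMap.adjoint (fderiv ℝ g x - fderiv ℝ g x0)) l := by
        rw [map_sub]; rfl
      rw [e1]
      calc ‖(ContinuousLinearMap.adjoint (fderiv ℝ g x - fderiv ℝ g x0)) l‖
          ≤ ‖ContinuousLinearMap.adjoint (fderiv ℝ g x - fderiv ℝ g x0)‖ * ‖l‖ :=
            ContinuousLinearMap.le_opNorm _ _
        _ = ‖fderiv ℝ g x - fderiv ℝ g x0‖ * ‖l‖ := by
            rw [LinearIsometryEquiv.norm_map]
        _ ≤ (Kg' : ℝ) * ‖x - x0‖ * ‖l‖ :=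
            mul_le_mul_of_nonneg_right hfd (norm_nonneg _)
    have hgradd : ‖gradient f x - gradient f x0‖ ≤ (Kf : ℝ) * ‖x - x0‖ := by
      have e1 : ‖gradient f x - gradient f x0‖ = ‖fderiv ℝ f x - fderiv ℝ f x0‖ := by
        simp only [gradient]
        rw [← map_sub, LinearIsometryEquiv.norm_map]
      rw [e1]
      have := hLf.dist_le_mul x hxtf x0 hx0tf
      rwa [dist_eq_norm, dist_eq_norm] at this
    have hgd : ‖g x - g x0‖ ≤ (Kg : ℝ) * ‖x - x0‖ := by
      have := hLg.dist_le_mul x hxtg x0 hx0tg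
      rwa [dist_eq_norm, dist_eq_norm] at this
    have e1 : ‖η - gradient f x0‖ ≤ ((Kg' : ℝ) * B + (Kf : ℝ) + 1) * N := by
      have key : η - gradient f x0
          = (ContinuousLinearMap.adjoint (fderiv ℝ g x) l
              - ContinuousLinearMap.adjoint (fderiv ℝ g x0) l)
            + (gradient f x - gradient f x0) - a := by
        have heq : ContinuousLinearMap.adjoint (fderiv ℝ g x) l = a - gradient f x :=
          eq_sub_of_add_eq' h1
        rw [hηdef, heq]; abel
      calc ‖η - gradient f x0‖
          ≤ ‖ContinuousLinearMap.adjoint (fderiv ℝ g x) l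
              - ContinuousLinearMap.adjoint (fderiv ℝ g x0) l‖
            + ‖gradient f x - gradient f x0‖ + ‖a‖ := by
            rw [key]
            refine (norm_sub_le _ _).trans ?_
            gcongr
            exact norm_add_le _ _
        _ ≤ (Kg' : ℝ) * ‖x - x0‖ * ‖l‖ + (Kf : ℝ) * ‖x - x0‖ + ‖a‖ := by
            gcongr
        _ ≤ (Kg' : ℝ) * N * B + (Kf : ℝ) * N + N := by
            have t1 : (Kg' : ℝ) * ‖x - x0‖ * ‖l‖ ≤ (Kg' : ℝ) * N * B :=
              mul_le_mul (mul_le_mul_of_nonneg_left hx Kg'.coe_nonneg) hlb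
                (norm_nonneg _) (by positivity)
            have t2 : (Kf : ℝ) * ‖x - x0‖ ≤ (Kf : ℝ) * N :=
              mul_le_mul_of_nonneg_left hx Kf.coe_nonneg
            linarith
        _ = ((Kg' : ℝ) * B + (Kf : ℝ) + 1) * N := by ring
    have e2 : ‖y - g x0‖ ≤ ((Kg : ℝ) + 1) * N := by
      calc ‖y - g x0‖ = ‖(g x - g x0) - b‖ := by rw [hydef]; congr 1; abel
        _ ≤ ‖g x - g x0‖ + ‖b‖ := norm_sub_le _ _
        _ ≤ (Kg : ℝ) * N + N := by
            refine add_le_add ?_ hb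
            calc ‖g x - g x0‖ ≤ (Kg : ℝ) * ‖x - x0‖ := hgd
              _ ≤ (Kg : ℝ) * N := mul_le_mul_of_nonneg_left hx (by positivity)
        _ = ((Kg : ℝ) + 1) * N := by ring
    have ep : ‖((η, y) : X × Y) - (gradient f x0, g x0)‖ ≤ C * N := by
      have : ((η, y) : X × Y) - (gradient f x0, g x0) = (η - gradient f x0, y - g x0) := rfl
      rw [this, Prod.norm_def]
      refine max_le ?_ ?_
      · refine e1.trans (mul_le_mul_of_nonneg_right ?_ hN0)
        have h0 : (0 : ℝ) ≤ (Kg : ℝ) := Kg.coe_nonneg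
        rw [hCdef]; linarith
      · refine e2.trans (mul_le_mul_of_nonneg_right ?_ hN0)
        have h0 : (0 : ℝ) ≤ (Kf : ℝ) := Kf.coe_nonneg
        have h1 : (0 : ℝ) ≤ (Kg' : ℝ) * B := by positivity
        rw [hCdef]; linarith
    have hpε : ‖((η, y) : X × Y) - (gradient f x0, g x0)‖ ≤ ε := by
      calc ‖((η, y) : X × Y) - (gradient f x0, g x0)‖ ≤ C * N := ep
        _ ≤ C * (ε / C) := mul_le_mul_of_nonneg_left hNε (le_of_lt hC)
        _ = ε := by field_simp
    obtain ⟨l', hl', hle⟩ := H (η, y) hpε l hmemG hld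
    refine ⟨l', hset.subset hl', ?_⟩
    calc ‖l - l'‖ ≤ κ * ‖((η, y) : X × Y) - (gradient f x0, g x0)‖ := hle
        _ ≤ κ * (C * N) := mul_le_mul_of_nonneg_left ep (le_of_lt hκ)
        _ = κ * C * N := by ring

end
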